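/- (Goldschmidt's Lemma) Let A₀ be the rank-two amalgam P₁ ←ψ₁− B −ψ₂→ P₂, where ψ₁, ψ₂ are injective group homomorphisms. Let A_i ≤ Aut(P_i) be the subgroup of automorphisms of P_i leaving im ψ_i invariant, let α_i : A_i → Aut(B) be given by f ↦ ψ_i⁻¹ ∘ f ∘ ψ_i, and set Ā_i = im α_i ≤ Aut(B). Then there is a one-to-one correspondence between isomorphism classes of amalgams of type A₀ and (Ā₁, Ā₂)-double cosets in Aut(B). -/

import Mathlib

open Function

/-! A graph `Γ = (I, E)` (multiple edges and loops allowed) is encoded by its set `I`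
of vertices, its set `E` of geometric edges and a map `d0` assigning to each *directed*
edge (a geometric edge together with an orientation bit) its initial vertex.  The set
`Dir E = E × Bool` of directed edges carries the fixed-point-free involution
`Dir.bar`, and `d1 d = d0 d.bar`.  Data indexed by geometric edges automatically
satisfies the compatibility `X_e = X_ē`. -/

/-- The directed edges over a set `E` of geometric edges. -/
abbrev Dir (E : Type) : Type := E × Bool

/-- The orientation-reversal involution `e ↦ ē` (it is fixed-point free). -/
def Dir.bar {E : Type} (d : Dir E) : Dir E := (d.1, !d.2)
section Pullback

variable {G H : Type} [Group G] [Group H]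

/-- The automorphism `φ⁻¹ ∘ ψ` of `G` determined by two injective homomorphisms
`φ ψ : G → H` with the same range. -/
noncomputable def pullbackAut (φ ψ : G →* H) (hφ : Injective ⇑φ) (hψ : Injective ⇑ψ)
    (h : Set.range ⇑φ = Set.range ⇑ψ) : G ≃* G :=
  (MonoidHom.ofInjective hψ).trans
    ((MulEquiv.subgroupCongr (SetLike.ext' (by
        rw [MonoidHom.coe_range, MonoidHom.coe_range, h]) : ψ.range = φ.range)).trans
      (MonoidHom.ofInjective hφ).symm)

lemma pullbackAut_spec (φ ψ : G →* H) (hφ : Injective ⇑φ) (hψ : Injective ⇑ψ)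
    (h : Set.range ⇑φ = Set.range ⇑ψ) (x : G) :
    φ (pullbackAut φ ψ hφ hψ h x) = ψ x := by
  show φ ((MonoidHom.ofInjective hφ).symm _) = ψ x
  rw [MonoidHom.apply_ofInjective_symm]
  show ((MonoidHom.ofInjective hψ) x : H) = ψ x
  rw [MonoidHom.ofInjective_apply]

/-- The subgroup of `Aut(H)` of all automorphisms stabilizing the image of `ψ : G → H`. -/
def stabSubgroup (ψ : G →* H) : Subgroup (MulAut H) where
  carrier := {f | f '' Set.range ⇑ψ = Set.range ⇑ψ}
  one_mem' := by simp
  mul_mem' := by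
    intro f g hf hg
    have h : ⇑(f * g) = ⇑f ∘ ⇑g := rfl
    simp only [Set.mem_setOf_eq] at *
    rw [h, Set.image_comp, hg, hf]
  inv_mem' := by
    intro f hf
    simp only [Set.mem_setOf_eq] at *
    have h : ⇑f⁻¹ ∘ ⇑f = id := by funext x; exact f.left_inv x
    calc ⇑f⁻¹ '' Set.range ⇑ψ = ⇑f⁻¹ '' (⇑f '' Set.range ⇑ψ) := by rw [hf]
      _ = (⇑f⁻¹ ∘ ⇑f) '' Set.range ⇑ψ := by rw [Set.image_comp]
      _ = Set.range ⇑ψ := by rw [h, Set.image_id]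

/-- The automorphism `ψ⁻¹ ∘ f ∘ ψ` of `G`, for `f` an automorphism of `H`
stabilizing the image of `ψ`. -/
noncomputable def stabAutFun (ψ : G →* H) (hψ : Injective ⇑ψ) (f : stabSubgroup ψ) :
    G ≃* G :=
  pullbackAut ψ ((f : MulAut H).toMonoidHom.comp ψ) hψ
    ((f : MulAut H).injective.comp hψ)
    (by rw [MonoidHom.coe_comp, Set.range_comp]; exact f.2.symm)

lemma stabAutFun_spec (ψ : G →* H) (hψ : Injective ⇑ψ) (f : stabSubgroup ψ) (x : G) :
    ψ (stabAutFun ψ hψ f x) = (f : MulAut H) (ψ x) :=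
  pullbackAut_spec _ _ _ _ _ x

/-- The homomorphism `α = ad(ψ) : Aut_H(im ψ) → Aut(G)`, `f ↦ ψ⁻¹ ∘ f ∘ ψ`. -/
noncomputable def stabToAut (ψ : G →* H) (hψ : Injective ⇑ψ) :
    stabSubgroup ψ →* MulAut G where
  toFun := stabAutFun ψ hψ
  map_one' := MulEquiv.ext fun x => hψ (by rw [stabAutFun_spec]; rfl)
  map_mul' f g := MulEquiv.ext fun x => hψ (by
    rw [stabAutFun_spec]
    have h : ((f * g : stabSubgroup ψ) : MulAut H) (ψ x)
        = (f : MulAut H) ((g : MulAut H) (ψ x)) := rfl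
    rw [h, ← stabAutFun_spec ψ hψ g, ← stabAutFun_spec ψ hψ f]
    rfl)

end Pullback

section Amalgam

variable {I E : Type} (d0 : Dir E → I) (Gv : I → Type) (Ge : E → Type)
  [∀ i, Group (Gv i)] [∀ e, Group (Ge e)]

/-- An amalgam over the graph encoded by `d0 : Dir E → I`, with vertex groups `Gv`
and edge groups `Ge` (automatically satisfying `G_e = G_ē`): a collection of
injective inclusion maps `φ_e : G_{d0 e} → G_e`. -/
structure Amalgam : Type where
  φ : ∀ d : Dir E, Gv (d0 d) →* Ge d.1
  inj : ∀ d : Dir E, Injective ⇑(φ d)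

variable {d0 Gv Ge}

/-- `A` has type `A₀`: same groups, and the inclusion maps have the same images. -/
def Amalgam.SameType (A A₀ : Amalgam d0 Gv Ge) : Prop :=
  ∀ d : Dir E, Set.range ⇑(A.φ d) = Set.range ⇑(A₀.φ d)

/-- Isomorphism of two amalgams with the same groups: a collection of automorphisms
`χ_i` of `G_i` and `χ_e = χ_ē` of `G_e` with `χ_e ∘ φ_e = φ'_e ∘ χ_{d0 e}`. -/
def Amalgam.Iso (A A' : Amalgam d0 Gv Ge) : Prop :=
  ∃ (χv : ∀ i, MulAut (Gv i)) (χe : ∀ e, MulAut (Ge e)),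
    ∀ (d : Dir E) (x : Gv (d0 d)), χe d.1 (A.φ d x) = A'.φ d (χv (d0 d) x)

/-- The edge group `A_e = Aut_{G_e}(Ḡ_{d0 e}, Ḡ_{d1 e})` of the reference graph of
groups: automorphisms of `G_e` stabilizing the images of both inclusion maps. -/
def edgeSub (A₀ : Amalgam d0 Gv Ge) (e : E) : Subgroup (MulAut (Ge e)) :=
  stabSubgroup (A₀.φ (e, false)) ⊓ stabSubgroup (A₀.φ (e, true))

lemma edgeSub_le (A₀ : Amalgam d0 Gv Ge) (d : Dir E) :
    edgeSub A₀ d.1 ≤ stabSubgroup (A₀.φ d) := by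
  obtain ⟨e, b⟩ := d
  cases b
  · exact inf_le_left
  · exact inf_le_right

/-- The edge maps `α_e = ad(ψ_e) : A_e → Aut(G_{d0 e})` of the reference graph of
groups of the reference amalgam `A₀`. -/
noncomputable def refα (A₀ : Amalgam d0 Gv Ge) (d : Dir E) :
    edgeSub A₀ d.1 →* MulAut (Gv (d0 d)) :=
  (stabToAut (A₀.φ d) (A₀.inj d)).comp (Subgroup.inclusion (edgeSub_le A₀ d))

/-- The element `δ^A_e = φ_e⁻¹ ∘ ψ_e ∈ Aut(G_{d0 e})` of the pointing associated to an
amalgam `A` of type `A₀`. -/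
noncomputable def deltaOf (A A₀ : Amalgam d0 Gv Ge) (h : A.SameType A₀) (d : Dir E) :
    MulAut (Gv (d0 d)) :=
  pullbackAut (A.φ d) (A₀.φ d) (A.inj d) (A₀.inj d) (h d)

/-- The amalgam associated to a pointing `δ` of the reference graph of groups of `A₀`:
its inclusion maps are `φ_e = ψ_e ∘ δ_e⁻¹`. -/
def amalgamOf (A₀ : Amalgam d0 Gv Ge) (δ : ∀ d : Dir E, MulAut (Gv (d0 d))) :
    Amalgam d0 Gv Ge where
  φ d := (A₀.φ d).comp ((δ d)⁻¹ : MulAut (Gv (d0 d))).toMonoidHom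
  inj d := (A₀.inj d).comp (MulEquiv.injective _)

lemma amalgamOf_sameType (A₀ : Amalgam d0 Gv Ge) (δ : ∀ d : Dir E, MulAut (Gv (d0 d))) :
    (amalgamOf A₀ δ).SameType A₀ := by
  intro d
  show Set.range ⇑((A₀.φ d).comp ((δ d)⁻¹ : MulAut (Gv (d0 d))).toMonoidHom) = _
  rw [MonoidHom.coe_comp, Surjective.range_comp]
  exact MulEquiv.surjective _

end Amalgam

section GoldAux

variable {B P : Type} [Group B] [Group P]

lemma stabToAut_spec (ψ : B →* P) (hψ : Injective ⇑ψ) (s : stabSubgroup ψ) (x : B) :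
    ψ (stabToAut ψ hψ s x) = (s : MulAut P) (ψ x) :=
  stabAutFun_spec ψ hψ s x

/-- Forward direction: an isomorphism component yields an element of `Ā` conjugating
the deltas. -/
lemma gold_aux (ψ : B →* P) (hψ : Injective ⇑ψ)
    (φ φ' : B →* P) (hφ : Injective ⇑φ) (hφ' : Injective ⇑φ')
    (hr : Set.range ⇑φ = Set.range ⇑ψ) (hr' : Set.range ⇑φ' = Set.range ⇑ψ)
    (χ : MulAut P) (χB : MulAut B) (hc : ∀ x, χ (φ x) = φ' (χB x)) :
    ∃ s : stabSubgroup ψ,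
      stabToAut ψ hψ s * pullbackAut ψ φ hψ hφ hr.symm
        = pullbackAut ψ φ' hψ hφ' hr'.symm * χB := by
  have hmem : χ ∈ stabSubgroup ψ := by
    show ⇑χ '' Set.range ⇑ψ = Set.range ⇑ψ
    calc ⇑χ '' Set.range ⇑ψ = ⇑χ '' Set.range ⇑φ := by rw [hr]
      _ = Set.range (⇑χ ∘ ⇑φ) := (Set.range_comp _ _).symm
      _ = Set.range (⇑φ' ∘ ⇑χB) := congrArg Set.range (funext hc)
      _ = Set.range ⇑φ' := χB.surjective.range_comp _
      _ = Set.range ⇑ψ := hr'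
  refine ⟨⟨χ, hmem⟩, MulEquiv.ext fun x => hψ ?_⟩
  rw [show ∀ (a b : MulAut B) (y : B), (a * b) y = a (b y) from fun _ _ _ => rfl]
  rw [show ∀ (a b : MulAut B) (y : B), (a * b) y = a (b y) from fun _ _ _ => rfl]
  rw [stabToAut_spec, pullbackAut_spec ψ φ hψ hφ hr.symm, pullbackAut_spec]
  exact hc x

/-- Backward direction: an element of `Ā` conjugating the deltas yields an
isomorphism component. -/
lemma gold_aux2 (ψ : B →* P) (hψ : Injective ⇑ψ)
    (φ φ' : B →* P) (hφ : Injective ⇑φ) (hφ' : Injective ⇑φ')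
    (hr : Set.range ⇑φ = Set.range ⇑ψ) (hr' : Set.range ⇑φ' = Set.range ⇑ψ)
    (s : stabSubgroup ψ) (χB : MulAut B)
    (he : stabToAut ψ hψ s * pullbackAut ψ φ hψ hφ hr.symm
        = pullbackAut ψ φ' hψ hφ' hr'.symm * χB) (x : B) :
    (s : MulAut P) (φ x) = φ' (χB x) := by
  have h1 := congrArg (fun (f : MulAut B) => ψ (f x)) he
  simp only [show ∀ (a b : MulAut B) (y : B), (a * b) y = a (b y) from
    fun _ _ _ => rfl] at h1
  rw [stabToAut_spec, pullbackAut_spec ψ φ hψ hφ hr.symm,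
    pullbackAut_spec ψ φ' hψ hφ' hr'.symm] at h1
  exact h1

end GoldAux

/-- **Goldschmidt's Lemma.** Let `A₀` be the rank-two amalgam
`P₁ ←ψ₁− B −ψ₂→ P₂` with `ψ₁, ψ₂` injective.  Amalgams of type `A₀` are pairs of
injective homomorphisms `φᵢ : B → Pᵢ` with `im φᵢ = im ψᵢ`; an isomorphism between two
such amalgams is a triple of automorphisms `χ_B ∈ Aut(B)`, `χᵢ ∈ Aut(Pᵢ)` with
`χᵢ ∘ φᵢ = φ'ᵢ ∘ χ_B`.  With `Āᵢ = im(ad ψᵢ) ≤ Aut(B)` (the image of the subgroup of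
`Aut(Pᵢ)` leaving `im ψᵢ` invariant), there is a one-to-one correspondence between
isomorphism classes of amalgams of type `A₀` and `(Ā₁, Ā₂)`-double cosets in `Aut(B)`. -/
theorem goldschmidt_lemma {B P₁ P₂ : Type} [Group B] [Group P₁] [Group P₂]
    (ψ₁ : B →* P₁) (ψ₂ : B →* P₂) (h₁ : Injective ⇑ψ₁) (h₂ : Injective ⇑ψ₂) :
    ∃ F : Quot (fun A A' :
          {p : (B →* P₁) × (B →* P₂) //
            Injective ⇑p.1 ∧ Injective ⇑p.2 ∧
            Set.range ⇑p.1 = Set.range ⇑ψ₁ ∧ Set.range ⇑p.2 = Set.range ⇑ψ₂} =>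
          ∃ (χB : MulAut B) (χ₁ : MulAut P₁) (χ₂ : MulAut P₂),
            (∀ x, χ₁ (A.1.1 x) = A'.1.1 (χB x)) ∧
            (∀ x, χ₂ (A.1.2 x) = A'.1.2 (χB x))) →
        DoubleCoset.Quotient ((stabToAut ψ₁ h₁).range : Set (MulAut B))
          ((stabToAut ψ₂ h₂).range : Set (MulAut B)),
      Function.Bijective F := by
  classical
  set S := {p : (B →* P₁) × (B →* P₂) //
      Injective ⇑p.1 ∧ Injective ⇑p.2 ∧
      Set.range ⇑p.1 = Set.range ⇑ψ₁ ∧ Set.range ⇑p.2 = Set.range ⇑ψ₂} with hS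
  let δ₁ : S → MulAut B := fun A => pullbackAut ψ₁ A.1.1 h₁ A.2.1 A.2.2.2.1.symm
  let δ₂ : S → MulAut B := fun A => pullbackAut ψ₂ A.1.2 h₂ A.2.2.1 A.2.2.2.2.symm
  let f : S → DoubleCoset.Quotient ((stabToAut ψ₁ h₁).range : Set (MulAut B))
      ((stabToAut ψ₂ h₂).range : Set (MulAut B)) :=
    fun A => DoubleCoset.mk _ _ (δ₁ A * (δ₂ A)⁻¹)
  have hwd : ∀ A A' : S,
      (∃ (χB : MulAut B) (χ₁ : MulAut P₁) (χ₂ : MulAut P₂),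
        (∀ x, χ₁ (A.1.1 x) = A'.1.1 (χB x)) ∧
        (∀ x, χ₂ (A.1.2 x) = A'.1.2 (χB x))) → f A = f A' := by
    rintro A A' ⟨χB, χ₁, χ₂, hc1, hc2⟩
    obtain ⟨s₁, hs₁⟩ := gold_aux ψ₁ h₁ A.1.1 A'.1.1 A.2.1 A'.2.1
      A.2.2.2.1 A'.2.2.2.1 χ₁ χB hc1
    obtain ⟨s₂, hs₂⟩ := gold_aux ψ₂ h₂ A.1.2 A'.1.2 A.2.2.1 A'.2.2.1
      A.2.2.2.2 A'.2.2.2.2 χ₂ χB hc2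
    refine (DoubleCoset.eq _ _ _ _).mpr
      ⟨stabToAut ψ₁ h₁ s₁, ⟨s₁, rfl⟩, (stabToAut ψ₂ h₂ s₂)⁻¹,
        Subgroup.inv_mem _ ⟨s₂, rfl⟩, ?_⟩
    have hs₁' : stabToAut ψ₁ h₁ s₁ * δ₁ A = δ₁ A' * χB := hs₁
    have hs₂' : stabToAut ψ₂ h₂ s₂ * δ₂ A = δ₂ A' * χB := hs₂
    have e1 : δ₁ A' = stabToAut ψ₁ h₁ s₁ * δ₁ A * χB⁻¹ := by
      rw [hs₁']; group
    have e2 : δ₂ A' = stabToAut ψ₂ h₂ s₂ * δ₂ A * χB⁻¹ := by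
      rw [hs₂']; group
    rw [e1, e2]; group
  refine ⟨Quot.lift f hwd, ?_, ?_⟩
  · -- injectivity
    intro q q'
    refine Quot.induction_on₂ q q' ?_
    intro A A' h
    apply Quot.sound
    obtain ⟨a, ⟨s₁, rfl⟩, b, ⟨s₂, rfl⟩, key⟩ := (DoubleCoset.eq _ _ _ _).mp h
    set a₁ := stabToAut ψ₁ h₁ s₁
    set a₂ := stabToAut ψ₂ h₂ s₂
    refine ⟨(δ₂ A')⁻¹ * a₂⁻¹ * δ₂ A, (s₁ : MulAut P₁), ((s₂⁻¹ : stabSubgroup ψ₂) : MulAut P₂),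
      ?_, ?_⟩
    · intro x
      refine gold_aux2 ψ₁ h₁ A.1.1 A'.1.1 A.2.1 A'.2.1
        A.2.2.2.1 A'.2.2.2.1 s₁ _ ?_ x
      show a₁ * δ₁ A = δ₁ A' * ((δ₂ A')⁻¹ * a₂⁻¹ * δ₂ A)
      have key' : δ₁ A' * (δ₂ A')⁻¹ = a₁ * (δ₁ A * (δ₂ A)⁻¹) * a₂ := key
      calc a₁ * δ₁ A
          = a₁ * (δ₁ A * (δ₂ A)⁻¹) * a₂ * a₂⁻¹ * δ₂ A := by group
        _ = δ₁ A' * (δ₂ A')⁻¹ * a₂⁻¹ * δ₂ A := by rw [← key']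
        _ = δ₁ A' * ((δ₂ A')⁻¹ * a₂⁻¹ * δ₂ A) := by group
    · intro x
      refine gold_aux2 ψ₂ h₂ A.1.2 A'.1.2 A.2.2.1 A'.2.2.1
        A.2.2.2.2 A'.2.2.2.2 s₂⁻¹ _ ?_ x
      show stabToAut ψ₂ h₂ s₂⁻¹ * δ₂ A = δ₂ A' * ((δ₂ A')⁻¹ * a₂⁻¹ * δ₂ A)
      rw [map_inv]
      group
      rfl
  · -- surjectivity
    intro q
    refine Quotient.inductionOn' q ?_
    intro g
    have hinj : Injective ⇑(ψ₁.comp g.toMonoidHom) := h₁.comp g.injective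
    have hr : Set.range ⇑(ψ₁.comp g.toMonoidHom) = Set.range ⇑ψ₁ := by
      rw [MonoidHom.coe_comp]
      exact g.surjective.range_comp _
    refine ⟨Quot.mk _ ⟨(ψ₁.comp g.toMonoidHom, ψ₂), hinj, h₂, hr, rfl⟩, ?_⟩
    show DoubleCoset.mk _ _ _ = Quotient.mk'' g
    have hd1 : pullbackAut ψ₁ (ψ₁.comp g.toMonoidHom) h₁ hinj hr.symm = g :=
      MulEquiv.ext fun x => h₁ (by rw [pullbackAut_spec]; rfl)
    have hd2 : pullbackAut ψ₂ ψ₂ h₂ h₂ rfl = 1 :=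
      MulEquiv.ext fun x => h₂ (by rw [pullbackAut_spec]; rfl)
    show DoubleCoset.mk _ _
        (pullbackAut ψ₁ (ψ₁.comp g.toMonoidHom) h₁ hinj hr.symm *
          (pullbackAut ψ₂ ψ₂ h₂ h₂ rfl)⁻¹) = Quotient.mk'' g
    rw [hd1, hd2, inv_one, mul_one]
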